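/- arXiv:2012.09964 — 3 statements merged into one kernel-verified Lean document; each statement's English description precedes it below -/
import Mathlib

section
/- Let m ∈ M be a monitor and let s be an integer with 0 ≤ s ≤ σ − 1. Then the following are equivalent: (1) for every set V' = {m} ∪ F where F ⊆ N is a set of non-monitors with |F| ≤ s, every connected component of G − V' contains at least one monitor; (2) the auxiliary graph G_m is (s+1)-vertex-connected. -/
open SimpleGraph

/-- A measurement path in `G`: a walk together with its two endpoints. -/
abbrev MWalk {V : Type*} (G : SimpleGraph V) := Σ u : V, Σ v : V, G.Walk u v

/-- A measurement path traverses a node `x` iff `x` lies on the walk. -/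
def Traverses {V : Type*} {G : SimpleGraph V} (p : MWalk G) (x : V) : Prop :=
  x ∈ p.2.2.support

/-- Two failure sets `F`, `F'` are distinguishable w.r.t. the collection `P` of
measurement paths: some path of `P` traverses a node of one set but no node of
the other. -/
def Distinguishable {V : Type*} {G : SimpleGraph V} (P : Set (MWalk G))
    (F F' : Set V) : Prop :=
  (∃ p ∈ P, (∃ x ∈ F, Traverses p x) ∧ ∀ x ∈ F', ¬ Traverses p x) ∨
  (∃ p ∈ P, (∃ x ∈ F', Traverses p x) ∧ ∀ x ∈ F, ¬ Traverses p x)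

/-- `k`-identifiability w.r.t. paths `P`, where failure sets range over subsets
of the non-monitor set `Nm`. -/
def Identifiable {V : Type*} {G : SimpleGraph V} (P : Set (MWalk G))
    (Nm : Set V) (k : ℕ) : Prop :=
  ∀ F F' : Set V, F ⊆ Nm → F' ⊆ Nm → F.ncard ≤ k → F'.ncard ≤ k → F ≠ F' →
    Distinguishable P F F'

/-- CAP measurement paths: all walks whose two endpoints are monitors
(endpoints may coincide, nodes may be revisited). -/
def CAP {V : Type*} (G : SimpleGraph V) (M : Set V) : Set (MWalk G) :=
  { p | p.1 ∈ M ∧ p.2.1 ∈ M }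

/-- CSP measurement paths: all simple (cycle-free) paths whose two endpoints
are distinct monitors. -/
def CSP {V : Type*} (G : SimpleGraph V) (M : Set V) : Set (MWalk G) :=
  { p | p.1 ∈ M ∧ p.2.1 ∈ M ∧ p.1 ≠ p.2.1 ∧ p.2.2.IsPath }

/-- Every connected component of `G − V'` contains at least one monitor. -/
def ComponentsHaveMonitor {V : Type*} (G : SimpleGraph V) (M : Set V)
    (V' : Set V) : Prop :=
  ∀ v : ↥(V'ᶜ), ∃ m : ↥(V'ᶜ), (m : V) ∈ M ∧ (G.induce V'ᶜ).Reachable v m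

/-- The auxiliary graph on the non-monitors `Nm` plus a new virtual monitor
`m'` (the vertex `none`), where the monitors in `M'` are used to create the
virtual links: edges of `G` between non-monitors are kept; `m'` is joined to
each non-monitor adjacent in `G` to some monitor in `M'`; and two non-monitors
each adjacent in `G` to some monitor in `M'` are joined.
`G* = StarGraph G Mᶜ M` and `G_m = StarGraph G Mᶜ (M \ {m})`. -/
def StarGraph {V : Type*} (G : SimpleGraph V) (Nm M' : Set V) :
    SimpleGraph (Option ↥Nm) where
  Adj x y :=
    match x, y with
    | none, none => False
    | none, some u => ∃ m ∈ M', G.Adj (u : V) m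
    | some u, none => ∃ m ∈ M', G.Adj (u : V) m
    | some u, some w => (u : V) ≠ (w : V) ∧
        (G.Adj (u : V) (w : V) ∨
          ((∃ m ∈ M', G.Adj (u : V) m) ∧ ∃ m ∈ M', G.Adj (w : V) m))
  symm := by
    refine ⟨?_⟩
    rintro (_ | u) (_ | w) h
    · exact h
    · exact h
    · exact h
    · exact ⟨fun e => h.1 e.symm, h.2.imp (fun hh => hh.symm) fun hh => ⟨hh.2, hh.1⟩⟩
  loopless := by
    refine ⟨?_⟩
    rintro (_ | u) h
    · exact h
    · exact h.1 rfl

/-- A graph `H` is `k`-vertex-connected: it has more than `k` vertices and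
removing fewer than `k` vertices leaves it connected. -/
def KConnected {W : Type*} (H : SimpleGraph W) (k : ℕ) : Prop :=
  k < Nat.card W ∧ ∀ S : Set W, S.ncard < k → (H.induce Sᶜ).Connected

/-- The vertex connectivity `δ(H)`: the largest `k` such that `H` is
`k`-vertex-connected. -/
noncomputable def vertexConnectivity {W : Type*} (H : SimpleGraph W) : ℕ :=
  sSup { k | KConnected H k }

/-- The maximum identifiability: the largest `k ∈ {0, …, |Nm|}` such that the
network is `k`-identifiable w.r.t. `P`. -/
noncomputable def maxIdent {V : Type*} {G : SimpleGraph V} (P : Set (MWalk G))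
    (Nm : Set V) : ℕ :=
  sSup { k | k ≤ Nm.ncard ∧ Identifiable P Nm k }

/-- `MSC(v)`: the minimum cardinality of a set `V' ⊆ Nm \ {v}` of non-monitors
such that every path of `P` traversing `v` traverses some node of `V'`
(`⊤ = ∞` if no such set exists). -/
noncomputable def MSC {V : Type*} {G : SimpleGraph V} (P : Set (MWalk G))
    (Nm : Set V) (v : V) : ℕ∞ :=
  sInf { n : ℕ∞ | ∃ V' : Set V, V' ⊆ Nm \ {v} ∧
    (∀ p ∈ P, Traverses p v → ∃ x ∈ V', Traverses p x) ∧ n = (V'.ncard : ℕ∞) }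

section AuxLemmas

variable {V : Type*} {G : SimpleGraph V} {M : Set V} {m : V} {F : Set V}
  {T : Set (Option ↥Mᶜ)}

/-- From a walk in `G − ({m} ∪ F)` from a non-monitor `v` to a monitor, extract
a non-monitor `x` adjacent (in `G`) to a monitor of `M \ {m}` which is reachable
from `v` in the induced star graph. -/
lemma aux_toStar (hm : m ∈ M)
    (hT : ∀ u : ↥Mᶜ, (u : V) ∉ F → some u ∈ T) :
    ∀ {v mon : ↥(({m} ∪ F)ᶜ : Set V)}
      (_ : (G.induce (({m} ∪ F)ᶜ : Set V)).Walk v mon)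
      (hv : (v : V) ∉ M), (mon : V) ∈ M →
      ∃ x : ↥Mᶜ, ∃ hx : some x ∈ T, (∃ m' ∈ M \ {m}, G.Adj (x : V) m') ∧
        ((StarGraph G Mᶜ (M \ {m})).induce T).Reachable
          ⟨some ⟨(v : V), hv⟩, hT ⟨(v : V), hv⟩ (fun h => v.2 (Or.inr h))⟩
          ⟨some x, hx⟩ := by
  intro v mon p
  induction p with
  | nil => intro hv hmon; exact absurd hmon hv
  | @cons a b c hadj q ih =>
    intro hv hmon
    have hadj' : G.Adj (a : V) (b : V) := hadj
    by_cases hbM : (b : V) ∈ M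
    · refine ⟨⟨(a : V), hv⟩, hT _ (fun h => a.2 (Or.inr h)),
        ⟨(b : V), ⟨hbM, fun hbm => b.2 (Or.inl hbm)⟩, hadj'⟩, SimpleGraph.Reachable.refl _⟩
    · obtain ⟨x, hx, hadjmon, hreach⟩ := ih hbM hmon
      refine ⟨x, hx, hadjmon, SimpleGraph.Reachable.trans (SimpleGraph.Adj.reachable ?_) hreach⟩
      show (StarGraph G Mᶜ (M \ {m})).Adj (some ⟨(a : V), hv⟩) (some ⟨(b : V), hbM⟩)
      exact ⟨hadj'.ne, Or.inl hadj'⟩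

/-- From a walk in the induced star graph from `some x` to `none`, extract a
monitor reachable from `x` in `G − ({m} ∪ F)`. -/
lemma aux_toG (hm : m ∈ M) (hF : F ⊆ Mᶜ)
    (hT : ∀ u : ↥Mᶜ, some u ∈ T → (u : V) ∉ F) :
    ∀ {a b : ↥T} (_ : ((StarGraph G Mᶜ (M \ {m})).induce T).Walk a b)
      (x : ↥Mᶜ), a.val = some x → b.val = none →
      ∃ mon : ↥(({m} ∪ F)ᶜ : Set V), (mon : V) ∈ M ∧
        ∃ hxK : (x : V) ∈ (({m} ∪ F)ᶜ : Set V),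
          (G.induce (({m} ∪ F)ᶜ : Set V)).Reachable ⟨(x : V), hxK⟩ mon := by
  intro a b p
  induction p with
  | nil =>
    intro x hax hbn
    rw [hax] at hbn; exact absurd hbn (by simp)
  | @cons a c b hadj q ih =>
    intro x hax hbn
    have hxT : some x ∈ T := by rw [← hax]; exact a.2
    have hxK : (x : V) ∈ (({m} ∪ F)ᶜ : Set V) := by
      intro h
      rcases h with h | h
      · exact x.2 (h ▸ hm)
      · exact hT x hxT h
    have hadj' : (StarGraph G Mᶜ (M \ {m})).Adj a.val c.val := hadj
    rw [hax] at hadj'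
    have fromMon : ∀ m' ∈ M \ {m}, G.Adj (x : V) m' →
        ∃ mon : ↥(({m} ∪ F)ᶜ : Set V), (mon : V) ∈ M ∧
        ∃ hxK : (x : V) ∈ (({m} ∪ F)ᶜ : Set V),
          (G.induce (({m} ∪ F)ᶜ : Set V)).Reachable ⟨(x : V), hxK⟩ mon := by
      intro m' hm' hadjm
      have hmK : m' ∈ (({m} ∪ F)ᶜ : Set V) := by
        intro h
        rcases h with h | h
        · exact hm'.2 h
        · exact hF h hm'.1
      refine ⟨⟨m', hmK⟩, hm'.1, hxK, SimpleGraph.Adj.reachable ?_⟩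
      show G.Adj (x : V) m'
      exact hadjm
    rcases hc : c.val with _ | y
    · rw [hc] at hadj'
      obtain ⟨m', hm', hadjm⟩ := hadj'
      exact fromMon m' hm' hadjm
    · rw [hc] at hadj'
      obtain ⟨hne, hor⟩ := hadj'
      rcases hor with hGadj | ⟨⟨m', hm', hadjm⟩, _⟩
      · obtain ⟨mon, hmonM, hyK, hreach⟩ := ih y hc hbn
        refine ⟨mon, hmonM, hxK, SimpleGraph.Reachable.trans (SimpleGraph.Adj.reachable ?_) hreach⟩
        show G.Adj (x : V) (y : V)
        exact hGadj
      · exact fromMon m' hm' hadjm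

end AuxLemmas

/-- For a monitor `m` and `0 ≤ s ≤ σ − 1`: every component of
`G − ({m} ∪ F)` contains a monitor for every set `F` of at most `s`
non-monitors iff the auxiliary graph `G_m` is `(s+1)`-vertex-connected. -/
theorem stmt_8 {V : Type*} [Fintype V] (G : SimpleGraph V) (hG : G.Connected)
    (M : Set V) (hM : M.Nonempty) (m : V) (hm : m ∈ M) (s : ℕ)
    (hs : s + 1 ≤ Mᶜ.ncard) :
    (∀ F : Set V, F ⊆ Mᶜ → F.ncard ≤ s →
        ComponentsHaveMonitor G M ({m} ∪ F)) ↔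
      KConnected (StarGraph G Mᶜ (M \ {m})) (s + 1) := by
  classical
  have hcardOpt : Nat.card (Option ↥Mᶜ) = Mᶜ.ncard + 1 := by
    rw [Finite.card_option, Nat.card_coe_set_eq]
  constructor
  · intro h
    refine ⟨by rw [hcardOpt]; omega, ?_⟩
    intro S hS
    have hSne : Sᶜ.Nonempty := by
      rw [Set.nonempty_compl]
      intro hSu
      have : S.ncard = Mᶜ.ncard + 1 := by rw [hSu, Set.ncard_univ, hcardOpt]
      omega
    set F : Set V := Subtype.val '' (Option.some ⁻¹' S) with hFdef
    have hFsub : F ⊆ Mᶜ := by rintro v ⟨u, _, rfl⟩; exact u.2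
    have hFcard : F.ncard ≤ s := by
      have h1 : F.ncard = (Option.some ⁻¹' S : Set ↥Mᶜ).ncard :=
        Set.ncard_image_of_injective _ Subtype.val_injective
      have h2 : (Option.some '' (Option.some ⁻¹' S : Set ↥Mᶜ)).ncard
          = (Option.some ⁻¹' S : Set ↥Mᶜ).ncard :=
        Set.ncard_image_of_injective _ (Option.some_injective _)
      have h3 : (Option.some '' (Option.some ⁻¹' S : Set ↥Mᶜ)) ⊆ S :=
        Set.image_preimage_subset _ _
      have h4 := Set.ncard_le_ncard h3 (Set.toFinite S)
      omega
    have hcm := h F hFsub hFcard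
    have hT1 : ∀ u : ↥Mᶜ, (u : V) ∉ F → some u ∈ Sᶜ := by
      intro u hu hmem
      exact hu ⟨u, hmem, rfl⟩
    have hT2 : ∀ u : ↥Mᶜ, some u ∈ Sᶜ → (u : V) ∉ F := by
      rintro u hu ⟨u', hu', hval⟩
      have : u' = u := Subtype.val_injective hval
      exact hu (this ▸ hu')
    have key : ∀ (u : ↥Mᶜ) (hu : some u ∈ Sᶜ),
        ∃ x : ↥Mᶜ, ∃ hx : some x ∈ Sᶜ, (∃ m' ∈ M \ {m}, G.Adj (x : V) m') ∧
          ((StarGraph G Mᶜ (M \ {m})).induce Sᶜ).Reachable ⟨some u, hu⟩ ⟨some x, hx⟩ := by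
      intro u hu
      have huF := hT2 u hu
      have huK : (u : V) ∈ (({m} ∪ F)ᶜ : Set V) := by
        intro hmem
        rcases hmem with hmem | hmem
        · exact u.2 (hmem ▸ hm)
        · exact huF hmem
      obtain ⟨mon, hmonM, hreach⟩ := hcm ⟨(u : V), huK⟩
      obtain ⟨p⟩ := hreach
      obtain ⟨x, hx, hadjmon, hstar⟩ := aux_toStar hm hT1 p u.2 hmonM
      exact ⟨x, hx, hadjmon, hstar⟩
    rw [SimpleGraph.connected_iff]
    refine ⟨?_, hSne.to_subtype⟩
    by_cases hnone : none ∈ S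
    · intro a b
      have hval : ∀ c : ↥(Sᶜ : Set (Option ↥Mᶜ)), ∃ u : ↥Mᶜ, c.val = some u := by
        intro c
        rcases hc : c.val with _ | u
        · exact absurd (hc ▸ c.2) (fun h => h hnone)
        · exact ⟨u, rfl⟩
      obtain ⟨u, hu⟩ := hval a
      obtain ⟨w, hw⟩ := hval b
      have huS : some u ∈ Sᶜ := hu ▸ a.2
      have hwS : some w ∈ Sᶜ := hw ▸ b.2
      obtain ⟨x, hx, ⟨m1, hm1, hadj1⟩, hstar1⟩ := key u huS
      obtain ⟨y, hy, ⟨m2, hm2, hadj2⟩, hstar2⟩ := key w hwS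
      have ha : a = ⟨some u, huS⟩ := Subtype.ext hu
      have hb : b = ⟨some w, hwS⟩ := Subtype.ext hw
      rw [ha, hb]
      by_cases hxy : x = y
      · subst hxy
        exact hstar1.trans hstar2.symm
      · refine hstar1.trans (SimpleGraph.Reachable.trans (SimpleGraph.Adj.reachable ?_) hstar2.symm)
        show (StarGraph G Mᶜ (M \ {m})).Adj (some x) (some y)
        exact ⟨Subtype.coe_injective.ne hxy, Or.inr ⟨⟨m1, hm1, hadj1⟩, ⟨m2, hm2, hadj2⟩⟩⟩
    · have h0 : (none : Option ↥Mᶜ) ∈ Sᶜ := hnone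
      have toNone : ∀ c : ↥(Sᶜ : Set (Option ↥Mᶜ)),
          ((StarGraph G Mᶜ (M \ {m})).induce Sᶜ).Reachable c ⟨none, h0⟩ := by
        intro c
        rcases hc : c.val with _ | u
        · have : c = ⟨none, h0⟩ := Subtype.ext hc
          rw [this]
        · have hu : some u ∈ Sᶜ := by rw [← hc]; exact c.2
          obtain ⟨x, hx, ⟨m', hm', hadjm⟩, hstar⟩ := key u hu
          have : c = ⟨some u, hu⟩ := Subtype.ext hc
          rw [this]
          refine hstar.trans (SimpleGraph.Adj.reachable ?_)
          show (StarGraph G Mᶜ (M \ {m})).Adj (some x) none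
          exact ⟨m', hm', hadjm⟩
      intro a b
      exact (toNone a).trans (toNone b).symm
  · intro hK F hFsub hFcard v
    by_cases hvM : (v : V) ∈ M
    · exact ⟨v, hvM, SimpleGraph.Reachable.refl v⟩
    · set S : Set (Option ↥Mᶜ) := Option.some '' (Subtype.val ⁻¹' F) with hSdef
      have hScard : S.ncard < s + 1 := by
        have h1 : S.ncard = (Subtype.val ⁻¹' F : Set ↥Mᶜ).ncard :=
          Set.ncard_image_of_injective _ (Option.some_injective _)
        have h2 : (Subtype.val '' (Subtype.val ⁻¹' F : Set ↥Mᶜ)).ncard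
            = (Subtype.val ⁻¹' F : Set ↥Mᶜ).ncard :=
          Set.ncard_image_of_injective _ Subtype.val_injective
        have h3 := Set.ncard_le_ncard
          (Set.image_preimage_subset (Subtype.val : ↥Mᶜ → V) F) (Set.toFinite F)
        omega
      have hconn := hK.2 S hScard
      have hT2 : ∀ u : ↥Mᶜ, some u ∈ Sᶜ → (u : V) ∉ F := by
        intro u hu huF
        exact hu ⟨u, huF, rfl⟩
      have hvS : some (⟨(v : V), hvM⟩ : ↥Mᶜ) ∈ Sᶜ := by
        rintro ⟨u, huF, heq⟩
        have heq' : u = ⟨(v : V), hvM⟩ := Option.some_injective _ heq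
        rw [heq'] at huF
        exact v.2 (Or.inr huF)
      have h0S : (none : Option ↥Mᶜ) ∈ Sᶜ := by
        rintro ⟨u, _, heq⟩
        exact Option.some_ne_none _ heq
      obtain ⟨p⟩ := hconn.preconnected ⟨some ⟨(v : V), hvM⟩, hvS⟩ ⟨none, h0S⟩
      obtain ⟨mon, hmonM, hxK, hreach⟩ := aux_toG hm hFsub hT2 p ⟨(v : V), hvM⟩ rfl rfl
      refine ⟨mon, hmonM, ?_⟩
      have hveq : (⟨(v : V), hxK⟩ : ↥((({m} : Set V) ∪ F)ᶜ)) = v := Subtype.ext rfl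
      exact hveq ▸ hreach
end

section
/- G is σ-identifiable under CSP if and only if every non-monitor is adjacent in G to at least two monitors. -/
open SimpleGraph

lemma interior_nbrs {V : Type*} {G : SimpleGraph V} :
    ∀ {a b : V} (w : G.Walk a b), w.IsPath → ∀ {v : V}, v ∈ w.support → v ≠ a → v ≠ b →
    ∃ x ∈ w.support, ∃ y ∈ w.support, x ≠ y ∧ G.Adj v x ∧ G.Adj v y := by
  intro a b w
  induction w with
  | nil =>
    intro _ v hv ha _
    simp only [Walk.support_nil, List.mem_singleton] at hv
    exact absurd hv ha
  | @cons a c b h w' ih =>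
    intro hp v hv ha hb
    have hv' : v ∈ w'.support := by
      rcases (Walk.mem_support_iff _).mp hv with h1 | h1
      · exact absurd h1 ha
      · exact h1
    by_cases hc : v = c
    · subst hc
      cases w' with
      | nil => exact absurd rfl hb
      | @cons _ d _ h₂ w'' =>
        refine ⟨a, ?_, d, ?_, ?_, h.symm, h₂⟩
        · simp [Walk.support_cons]
        · simp [Walk.support_cons]
        · intro e; subst e
          have := (Walk.cons_isPath_iff _ _).mp hp
          exact this.2 (by simp [Walk.support_cons])
    · have hp' : w'.IsPath := ((Walk.cons_isPath_iff _ _).mp hp).1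
      obtain ⟨x, hx, y, hy, hxy, h1, h2⟩ := ih hp' hv' hc hb
      exact ⟨x, by simp [Walk.support_cons, hx], y, by simp [Walk.support_cons, hy],
        hxy, h1, h2⟩

lemma good_path {V : Type*} {G : SimpleGraph V} {M : Set V} {F' : Set V} {v : V}
    (hF' : F' ⊆ Mᶜ) (hvM : v ∈ Mᶜ) (hvF' : v ∉ F')
    (hm : ∃ m₁ ∈ M, ∃ m₂ ∈ M, m₁ ≠ m₂ ∧ G.Adj v m₁ ∧ G.Adj v m₂) :
    ∃ p ∈ CSP G M, Traverses p v ∧ ∀ x ∈ F', ¬ Traverses p x := by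
  obtain ⟨m₁, hm₁, m₂, hm₂, hne, ha₁, ha₂⟩ := hm
  have hm₁v : m₁ ≠ v := fun e => hvM (e ▸ hm₁)
  have hm₂v : m₂ ≠ v := fun e => hvM (e ▸ hm₂)
  refine ⟨⟨m₁, m₂, Walk.cons ha₁.symm (Walk.cons ha₂ Walk.nil)⟩,
    ⟨hm₁, hm₂, hne, ?_⟩, ?_, ?_⟩
  · simp [Walk.isPath_def, Walk.support_cons, Walk.support_nil, hm₁v, hne, hm₂v.symm]
  · simp [Traverses, Walk.support_cons]
  · intro x hx
    have hxM : x ∈ Mᶜ := hF' hx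
    have hxv : x ≠ v := fun e => hvF' (e ▸ hx)
    simp only [Traverses, Walk.support_cons, Walk.support_nil, List.mem_cons,
      List.mem_singleton, List.not_mem_nil]
    push_neg
    exact ⟨fun e => hxM (e ▸ hm₁), hxv, fun e => hxM (e ▸ hm₂), trivial⟩

/-- `G` is `σ`-identifiable under CSP iff every non-monitor is adjacent to at
least two monitors. -/
theorem stmt_9 {V : Type*} [Fintype V] (G : SimpleGraph V) (hG : G.Connected)
    (M : Set V) (hM : M.Nonempty) :
    Identifiable (CSP G M) Mᶜ Mᶜ.ncard ↔
      ∀ v ∈ Mᶜ, ∃ m₁ ∈ M, ∃ m₂ ∈ M, m₁ ≠ m₂ ∧ G.Adj v m₁ ∧ G.Adj v m₂ := by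
  constructor
  · intro hid v hv
    have hvne : (Mᶜ : Set V) ≠ Mᶜ \ {v} := by
      intro e
      have : v ∈ Mᶜ \ {v} := e ▸ hv
      exact this.2 rfl
    have hd := hid Mᶜ (Mᶜ \ {v}) (le_refl _) Set.diff_subset (le_refl _)
      (Set.ncard_le_ncard Set.diff_subset (Set.toFinite _)) hvne
    rcases hd with ⟨p, hp, ⟨x, hxF, hxT⟩, havoid⟩ | ⟨p, hp, ⟨x, hxF, hxT⟩, havoid⟩
    · obtain ⟨h₁, h₂, hne, hpath⟩ := hp
      have hxv : x = v := by
        by_contra hxv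
        exact havoid x ⟨hxF, hxv⟩ hxT
      subst hxv
      have hv1 : x ≠ p.1 := fun e => hv (e ▸ h₁)
      have hv2 : x ≠ p.2.1 := fun e => hv (e ▸ h₂)
      obtain ⟨a, haS, b, hbS, hab, haA, hbA⟩ := interior_nbrs p.2.2 hpath hxT hv1 hv2
      have haM : a ∈ M := by
        by_contra haM
        exact havoid a ⟨haM, haA.ne'⟩ haS
      have hbM : b ∈ M := by
        by_contra hbM
        exact havoid b ⟨hbM, hbA.ne'⟩ hbS
      exact ⟨a, haM, b, hbM, hab, haA, hbA⟩
    · exact absurd hxT (havoid x hxF.1)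
  · intro h F F' hF hF' _ _ hne
    have : (∃ v ∈ F, v ∉ F') ∨ ∃ v ∈ F', v ∉ F := by
      by_contra hc
      push_neg at hc
      exact hne (Set.Subset.antisymm hc.1 hc.2)
    rcases this with ⟨v, hvF, hvF'⟩ | ⟨v, hvF', hvF⟩
    · obtain ⟨p, hp, hT, hav⟩ := good_path hF' (hF hvF) hvF' (h v (hF hvF))
      exact Or.inl ⟨p, hp, ⟨v, hvF, hT⟩, hav⟩
    · obtain ⟨p, hp, hT, hav⟩ := good_path hF (hF' hvF') hvF (h v (hF' hvF'))
      exact Or.inr ⟨p, hp, ⟨v, hvF', hT⟩, hav⟩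
end

section
/- Under UP with a given set P of measurement paths, suppose Δ = min over non-monitors v ∈ N of MSC(v) is finite (i.e., some P_v admits a cover by other non-monitors' path sets). Then the maximum identifiability of G under UP satisfies Δ − 1 ≤ Ω_UP(G) ≤ Δ. -/
open SimpleGraph

lemma enat_sInf_mem {s : Set ℕ∞} (h : sInf s ≠ ⊤) : sInf s ∈ s := by
  have h1 : sInf s < sInf s + 1 := (ENat.lt_add_one_iff h).mpr le_rfl
  have h2 : ¬ (sInf s + 1 ≤ sInf s) := not_le.mpr h1
  rw [le_sInf_iff] at h2
  push_neg at h2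
  obtain ⟨b, hb, hlt⟩ := h2
  have hle : sInf s ≤ b := sInf_le hb
  have hble : b ≤ sInf s := by
    rcases eq_or_ne b ⊤ with rfl | hbt
    · exact absurd hlt not_top_lt
    · exact (ENat.lt_add_one_iff h).mp hlt
  rwa [le_antisymm hle hble]

/-- Maximum identifiability under UP: with `Δ = min_{v ∈ N} MSC(v)` finite,
`Δ − 1 ≤ Ω_UP(G) ≤ Δ`. -/
theorem stmt_19 {V : Type*} [Fintype V] (G : SimpleGraph V) (hG : G.Connected)
    (M : Set V) (hM : M.Nonempty) (P : Set (MWalk G))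
    (hP : ∀ p ∈ P, p.1 ∈ M ∧ p.2.1 ∈ M ∧ p.2.2.IsPath) (Δ : ℕ∞)
    (hΔdef : Δ = sInf { n : ℕ∞ | ∃ v ∈ Mᶜ, n = MSC P Mᶜ v }) (hΔ : Δ ≠ ⊤) :
    Δ - 1 ≤ (maxIdent P Mᶜ : ℕ∞) ∧ (maxIdent P Mᶜ : ℕ∞) ≤ Δ := by
  classical
  set d : ℕ := Δ.toNat with hd_def
  have hd : (d : ℕ∞) = Δ := ENat.coe_toNat hΔ
  -- extract a non-monitor v attaining the minimum
  have hmem : Δ ∈ { n : ℕ∞ | ∃ v ∈ Mᶜ, n = MSC P Mᶜ v } := by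
    rw [hΔdef]; exact enat_sInf_mem (hΔdef ▸ hΔ)
  obtain ⟨v, hv, hveq⟩ := hmem
  -- extract an optimal cover V' for v
  have hmsc_ne : MSC P Mᶜ v ≠ ⊤ := hveq ▸ hΔ
  have hmem2 : MSC P Mᶜ v ∈ { n : ℕ∞ | ∃ V' : Set V, V' ⊆ Mᶜ \ {v} ∧
      (∀ p ∈ P, Traverses p v → ∃ x ∈ V', Traverses p x) ∧ n = (V'.ncard : ℕ∞) } := by
    unfold MSC at hmsc_ne ⊢
    exact enat_sInf_mem hmsc_ne
  obtain ⟨V', hV'sub, hcov, hV'eq⟩ := hmem2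
  have hV'card : V'.ncard = d := by
    have : (V'.ncard : ℕ∞) = (d : ℕ∞) := by rw [← hV'eq, ← hveq, hd]
    exact_mod_cast this
  have hvV' : v ∉ V' := fun h => (hV'sub h).2 rfl
  have hV'Nm : V' ⊆ Mᶜ := hV'sub.trans Set.diff_subset
  -- the candidate set for maxIdent
  have h0 : 0 ∈ { k | k ≤ Mᶜ.ncard ∧ Identifiable P Mᶜ k } := by
    refine ⟨Nat.zero_le _, fun F F' hF hF' hcF hcF' hne => ?_⟩
    exfalso
    have hF0 : F = ∅ := (Set.ncard_eq_zero (Set.toFinite _)).mp (Nat.le_zero.mp hcF)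
    have hF'0 : F' = ∅ := (Set.ncard_eq_zero (Set.toFinite _)).mp (Nat.le_zero.mp hcF')
    exact hne (hF0.trans hF'0.symm)
  -- upper bound: every achievable k is ≤ d
  have hub : ∀ k ∈ { k | k ≤ Mᶜ.ncard ∧ Identifiable P Mᶜ k }, k ≤ d := by
    rintro k ⟨hk1, hk2⟩
    by_contra hlt
    push_neg at hlt
    have hFsub : insert v V' ⊆ Mᶜ := Set.insert_subset hv hV'Nm
    have hcard : (insert v V').ncard = d + 1 := by
      rw [Set.ncard_insert_of_notMem hvV', hV'card]
    have hne : insert v V' ≠ V' := fun h => hvV' (h ▸ Set.mem_insert v V')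
    have hdist := hk2 (insert v V') V' hFsub hV'Nm (by omega)
      (by rw [hV'card]; omega) hne
    rcases hdist with ⟨p, hpP, ⟨x, hx, hT⟩, hnone⟩ | ⟨p, hpP, ⟨x, hx, hT⟩, hnone⟩
    · rcases hx with rfl | hx
      · obtain ⟨y, hy, hTy⟩ := hcov p hpP hT
        exact hnone y hy hTy
      · exact hnone x hx hT
    · exact hnone x (Set.mem_insert_of_mem v hx) hT
  have hle : maxIdent P Mᶜ ≤ d := by
    unfold maxIdent
    exact csSup_le ⟨0, h0⟩ hub
  -- lower bound: (d - 1)-identifiability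
  have key : ∀ (A B : Set V) (w : V), A ⊆ Mᶜ → B ⊆ Mᶜ → w ∈ A → w ∉ B →
      A.ncard ≤ d - 1 → B.ncard ≤ d - 1 →
      ∃ p ∈ P, Traverses p w ∧ ∀ x ∈ B, ¬ Traverses p x := by
    intro A B w hA hB hwA hwB hcA hcB
    have hApos : 0 < A.ncard := (Set.ncard_pos (Set.toFinite _)).mpr ⟨w, hwA⟩
    by_contra h
    push_neg at h
    have h1 : MSC P Mᶜ w ≤ (B.ncard : ℕ∞) := by
      unfold MSC
      exact sInf_le ⟨B, Set.subset_diff_singleton hB hwB, h, rfl⟩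
    have h2 : Δ ≤ MSC P Mᶜ w := by
      rw [hΔdef]
      exact sInf_le ⟨w, hA hwA, rfl⟩
    have h3 : (d : ℕ∞) ≤ (B.ncard : ℕ∞) := hd ▸ h2.trans h1
    have h4 : d ≤ B.ncard := by exact_mod_cast h3
    omega
  have hid : Identifiable P Mᶜ (d - 1) := by
    intro F F' hF hF' hcF hcF' hne
    by_cases hss : F ⊆ F'
    · have hns : ¬ F' ⊆ F := fun h => hne (hss.antisymm h)
      obtain ⟨w, hw1, hw2⟩ := Set.not_subset.mp hns
      obtain ⟨p, hp, hT, hav⟩ := key F' F w hF' hF hw1 hw2 hcF' hcF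
      exact Or.inr ⟨p, hp, ⟨w, hw1, hT⟩, hav⟩
    · obtain ⟨w, hw1, hw2⟩ := Set.not_subset.mp hss
      obtain ⟨p, hp, hT, hav⟩ := key F F' w hF hF' hw1 hw2 hcF hcF'
      exact Or.inl ⟨p, hp, ⟨w, hw1, hT⟩, hav⟩
  have hdle : d ≤ Mᶜ.ncard := hV'card ▸ Set.ncard_le_ncard hV'Nm (Set.toFinite _)
  have hmem3 : d - 1 ∈ { k | k ≤ Mᶜ.ncard ∧ Identifiable P Mᶜ k } := ⟨by omega, hid⟩
  have hge : d - 1 ≤ maxIdent P Mᶜ := by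
    unfold maxIdent
    exact le_csSup ⟨Mᶜ.ncard, fun k hk => hk.1⟩ hmem3
  constructor
  · rw [← hd, show ((d : ℕ∞) - 1) = ((d - 1 : ℕ) : ℕ∞) from (ENat.coe_sub d 1).symm]
    exact_mod_cast hge
  · rw [← hd]
    exact_mod_cast hle
end
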